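/- Let k be a finite field with q elements of odd characteristic, let W be a 2N-dimensional k-vector space with a nondegenerate alternating bilinear form, and let H(W) be the associated Heisenberg group. Every finite-dimensional irreducible complex representation ρ of H(W) whose central character is nontrivial (i.e. ρ(0,t) = ψ(t)·id for a nontrivial homomorphism ψ : (k,+) → ℂˣ) has dimension q^N. -/

import Mathlib

variable {k W : Type*} [Field k] [AddCommGroup W] [Module k W]

/-- The Heisenberg group structure on `W × k` attached to an alternating bilinear form `B`:
`(w₁,t₁)·(w₂,t₂) = (w₁+w₂, t₁+t₂+(1/2)⟨w₁,w₂⟩)`. -/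
def heisGroup (B : LinearMap.BilinForm k W) (halt : ∀ w : W, B w w = 0) :
    Group (W × k) where
  mul p q := (p.1 + q.1, p.2 + q.2 + (1 / 2 : k) * B p.1 q.1)
  one := (0, 0)
  inv p := (-p.1, -p.2)
  mul_assoc a b c := by
    refine Prod.ext (add_assoc _ _ _) ?_
    show a.2 + b.2 + (1 / 2 : k) * B a.1 b.1 + c.2 + (1 / 2 : k) * B (a.1 + b.1) c.1
        = a.2 + (b.2 + c.2 + (1 / 2 : k) * B b.1 c.1) + (1 / 2 : k) * B a.1 (b.1 + c.1)
    rw [map_add, LinearMap.add_apply, map_add]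
    ring
  one_mul a := by
    refine Prod.ext (zero_add _) ?_
    show (0 : k) + a.2 + (1 / 2 : k) * B 0 a.1 = a.2
    simp
  mul_one a := by
    refine Prod.ext (add_zero _) ?_
    show a.2 + 0 + (1 / 2 : k) * B a.1 0 = a.2
    simp
  inv_mul_cancel a := by
    refine Prod.ext (neg_add_cancel _) ?_
    show -a.2 + a.2 + (1 / 2 : k) * B (-a.1) a.1 = 0
    simp [halt]
/-- every finite-dimensional irreducible complex representation of the
Heisenberg group with nontrivial central character `ψ` has dimension `q^N`. -/
theorem heisenberg_irreducible_dim (q N : ℕ) [Fintype k]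
    (hq : Fintype.card k = q) (hchar : ringChar k ≠ 2)
    [FiniteDimensional k W] (hdim : Module.finrank k W = 2 * N)
    (B : LinearMap.BilinForm k W) (halt : ∀ w : W, B w w = 0)
    (hnd : ∀ w : W, (∀ v : W, B v w = 0) → w = 0)
    (V : Type*) [AddCommGroup V] [Module ℂ V] [FiniteDimensional ℂ V] :
    letI : Group (W × k) := heisGroup B halt
    ∀ (ρ : Representation ℂ (W × k) V) (ψ : AddChar k ℂˣ),
      Nontrivial V →
      (∀ U : Submodule ℂ V, (∀ g : W × k, ∀ v ∈ U, ρ g v ∈ U) → U = ⊥ ∨ U = ⊤) →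
      (∃ t : k, ψ t ≠ 1) →
      (∀ t : k, ρ ((0 : W), t) = ((ψ t : ℂˣ) : ℂ) • (LinearMap.id : V →ₗ[ℂ] V)) →
      Module.finrank ℂ V = q ^ N := by
  classical
  letI : Group (W × k) := heisGroup B halt
  intro ρ ψ hV hirr hψ hcen
  have hFinW : Finite W := Module.finite_of_finite k
  letI : Fintype W := Fintype.ofFinite W
  have hdpos : 0 < Module.finrank ℂ V := Module.finrank_pos
  -- group computation facts
  have hmul : ∀ p q : W × k,
      p * q = (p.1 + q.1, p.2 + q.2 + (1 / 2 : k) * B p.1 q.1) := fun p q => rfl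
  have hinv : ∀ p : W × k, p⁻¹ = (-p.1, -p.2) := fun p => rfl
  have hone : (1 : W × k) = ((0 : W), (0 : k)) := rfl
  have h2 : (2 : k) ≠ 0 := Ring.two_ne_zero hchar
  have hskew : ∀ v w : W, B w v = -B v w := by
    intro v w
    have h := halt (v + w)
    simp only [map_add, LinearMap.add_apply, halt, zero_add, add_zero] at h
    linear_combination h
  -- central scaling
  have hcent : ∀ (w : W) (t : k), ρ (w, t) = ((ψ t : ℂˣ) : ℂ) • ρ (w, (0 : k)) := by
    intro w t
    have hmm : (((0 : W), t) : W × k) * (w, (0 : k)) = (w, t) := by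
      rw [hmul]; simp
    calc ρ (w, t) = ρ (((0 : W), t) * (w, (0 : k))) := by rw [hmm]
      _ = ρ ((0 : W), t) * ρ (w, (0 : k)) := map_mul ρ _ _
      _ = ((ψ t : ℂˣ) : ℂ) • ρ (w, (0 : k)) := by
          rw [hcen t]
          ext v
          simp [Module.End.mul_apply]
  -- traces are conjugation invariant
  have htr : ∀ g h : W × k,
      LinearMap.trace ℂ V (ρ (g * h * g⁻¹)) = LinearMap.trace ℂ V (ρ h) := by
    intro g h
    have hx : ρ (g * h * g⁻¹) = ρ g * ρ h * ρ g⁻¹ := by rw [map_mul, map_mul]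
    rw [hx, LinearMap.trace_mul_comm, ← mul_assoc, ← map_mul, inv_mul_cancel, map_one,
      one_mul]
  -- explicit conjugation formula
  have hconjf : ∀ (v w : W) (t : k),
      ((v, (0 : k)) : W × k) * (w, t) * (v, (0 : k))⁻¹ = (w, t + B v w) := by
    intro v w t
    rw [hinv, hmul, hmul]
    refine Prod.ext ?_ ?_
    · show v + w + -v = w
      abel
    · show (0 : k) + t + (1 / 2 : k) * B v w + -0 + (1 / 2 : k) * B (v + w) (-v) = t + B v w
      have e1 : B (v + w) (-v) = B v w := by
        simp only [map_add, LinearMap.add_apply, map_neg, halt, hskew v w]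
        ring
      rw [e1]
      field_simp
      ring
  -- the character vanishes off the center
  have hvan : ∀ w : W, w ≠ 0 → LinearMap.trace ℂ V (ρ (w, (0 : k))) = 0 := by
    intro w hw
    obtain ⟨t₀, ht₀⟩ := hψ
    have hnall : ¬∀ v : W, B v w = 0 := fun h => hw (hnd w h)
    push_neg at hnall
    obtain ⟨v₀, hv₀⟩ := hnall
    have hex : ∃ v : W, B v w = t₀ :=
      ⟨(t₀ * (B v₀ w)⁻¹) • v₀, by
        rw [map_smul, LinearMap.smul_apply, smul_eq_mul]
        field_simp⟩
    obtain ⟨v, hv⟩ := hex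
    have h1 : LinearMap.trace ℂ V (ρ (w, (0 : k)))
        = LinearMap.trace ℂ V (ρ (((v, (0 : k)) : W × k) * (w, (0 : k)) * (v, (0 : k))⁻¹)) :=
      (htr _ _).symm
    rw [hconjf v w 0, zero_add, hv, hcent w t₀, map_smul, smul_eq_mul] at h1
    have hne : ((ψ t₀ : ℂˣ) : ℂ) ≠ 1 := fun h => ht₀ (Units.ext h)
    have h3 : (1 - ((ψ t₀ : ℂˣ) : ℂ)) * LinearMap.trace ℂ V (ρ (w, (0 : k))) = 0 := by
      rw [sub_mul, one_mul]
      linear_combination h1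
    rcases mul_eq_zero.mp h3 with h | h
    · exact absurd (sub_eq_zero.mp h).symm hne
    · exact h
  -- Schur's lemma
  have hschur : ∀ T : V →ₗ[ℂ] V, (∀ g : W × k, ρ g * T = T * ρ g) →
      ∃ c : ℂ, T = c • (1 : V →ₗ[ℂ] V) := by
    intro T hT
    obtain ⟨c, hc⟩ := Module.End.exists_eigenvalue (T : Module.End ℂ V)
    refine ⟨c, ?_⟩
    have hstab : ∀ g : W × k, ∀ x ∈ Module.End.eigenspace T c,
        ρ g x ∈ Module.End.eigenspace T c := by
      intro g x hx
      rw [Module.End.mem_eigenspace_iff] at hx ⊢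
      have h1 : T (ρ g x) = ρ g (T x) := by
        have h2 := congrArg (fun f : V →ₗ[ℂ] V => f x) (hT g)
        simpa [Module.End.mul_apply] using h2.symm
      rw [h1, hx, map_smul]
    rcases hirr _ hstab with hbot | htop
    · exact absurd hbot hc
    · ext x
      have hx : x ∈ Module.End.eigenspace T c := htop ▸ Submodule.mem_top
      rw [Module.End.mem_eigenspace_iff] at hx
      simpa using hx
  -- the averaged operator
  have hterm : ∀ (A : V →ₗ[ℂ] V) (v : W) (s : k) (w : W),
      ρ (v, s) * (ρ (w, (0 : k)) * A * ρ (-w, (0 : k)))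
        = (ρ (v + w, (0 : k)) * A * ρ (-(v + w), (0 : k))) * ρ (v, s) := by
    intro A v s w
    have e1 : ((v, s) : W × k) * (w, (0 : k)) = (v + w, s + (1 / 2 : k) * B v w) := by
      rw [hmul]
      refine Prod.ext rfl ?_
      show s + 0 + (1 / 2 : k) * B v w = s + (1 / 2 : k) * B v w
      ring
    have e2 : ((-(v + w), (0 : k)) : W × k) * (v, s) = (-w, s + (1 / 2 : k) * B v w) := by
      rw [hmul]
      refine Prod.ext ?_ ?_
      · show -(v + w) + v = -w
        abel
      · show (0 : k) + s + (1 / 2 : k) * B (-(v + w)) v = s + (1 / 2 : k) * B v w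
        have e3 : B (-(v + w)) v = B v w := by
          simp only [map_neg, map_add, LinearMap.neg_apply, LinearMap.add_apply, halt,
            hskew v w]
          ring
        rw [e3]
        ring
    have l1 : ρ (v, s) * ρ (w, (0 : k))
        = ((ψ (s + (1 / 2 : k) * B v w) : ℂˣ) : ℂ) • ρ (v + w, (0 : k)) := by
      rw [← map_mul, e1, hcent]
    have l2 : ρ (-(v + w), (0 : k)) * ρ (v, s)
        = ((ψ (s + (1 / 2 : k) * B v w) : ℂˣ) : ℂ) • ρ (-w, (0 : k)) := by
      rw [← map_mul, e2, hcent]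
    calc ρ (v, s) * (ρ (w, (0 : k)) * A * ρ (-w, (0 : k)))
        = ρ (v, s) * ρ (w, (0 : k)) * A * ρ (-w, (0 : k)) := by
          rw [← mul_assoc, ← mul_assoc]
      _ = (((ψ (s + (1 / 2 : k) * B v w) : ℂˣ) : ℂ) • ρ (v + w, (0 : k))) * A
            * ρ (-w, (0 : k)) := by rw [l1]
      _ = ((ψ (s + (1 / 2 : k) * B v w) : ℂˣ) : ℂ)
            • (ρ (v + w, (0 : k)) * A * ρ (-w, (0 : k))) := by
          rw [smul_mul_assoc, smul_mul_assoc]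
      _ = (ρ (v + w, (0 : k)) * A)
            * (((ψ (s + (1 / 2 : k) * B v w) : ℂˣ) : ℂ) • ρ (-w, (0 : k))) := by
          rw [mul_smul_comm]
      _ = (ρ (v + w, (0 : k)) * A) * (ρ (-(v + w), (0 : k)) * ρ (v, s)) := by rw [l2]
      _ = (ρ (v + w, (0 : k)) * A * ρ (-(v + w), (0 : k))) * ρ (v, s) := by
          rw [← mul_assoc]
  have hkey : ∀ A : V →ₗ[ℂ] V, ∃ c : ℂ,
      (∑ w : W, ρ (w, (0 : k)) * A * ρ (-w, (0 : k))) = c • (1 : V →ₗ[ℂ] V)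
      ∧ c * (Module.finrank ℂ V : ℂ) = (Fintype.card W : ℂ) * LinearMap.trace ℂ V A := by
    intro A
    have hcomm : ∀ g : W × k,
        ρ g * (∑ w : W, ρ (w, (0 : k)) * A * ρ (-w, (0 : k)))
          = (∑ w : W, ρ (w, (0 : k)) * A * ρ (-w, (0 : k))) * ρ g := by
      rintro ⟨v, s⟩
      rw [Finset.mul_sum, Finset.sum_mul]
      calc ∑ w : W, ρ (v, s) * (ρ (w, (0 : k)) * A * ρ (-w, (0 : k)))
          = ∑ w : W, (ρ (v + w, (0 : k)) * A * ρ (-(v + w), (0 : k))) * ρ (v, s) :=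
            Finset.sum_congr rfl (fun w _ => hterm A v s w)
        _ = ∑ w : W, (ρ (w, (0 : k)) * A * ρ (-w, (0 : k))) * ρ (v, s) :=
            Fintype.sum_equiv (Equiv.addLeft v) _ _ (fun w => rfl)
    obtain ⟨c, hc⟩ := hschur _ hcomm
    refine ⟨c, hc, ?_⟩
    have htrT : LinearMap.trace ℂ V (∑ w : W, ρ (w, (0 : k)) * A * ρ (-w, (0 : k)))
        = (Fintype.card W : ℂ) * LinearMap.trace ℂ V A := by
      rw [map_sum]
      have hterm2 : ∀ w : W,
          LinearMap.trace ℂ V (ρ (w, (0 : k)) * A * ρ (-w, (0 : k)))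
            = LinearMap.trace ℂ V A := by
        intro w
        rw [LinearMap.trace_mul_comm, ← mul_assoc, ← map_mul]
        have hmw : ((-w, (0 : k)) : W × k) * (w, (0 : k)) = 1 := by
          rw [hmul, hone]
          refine Prod.ext (by show -w + w = 0; exact neg_add_cancel w) ?_
          show (0 : k) + 0 + (1 / 2 : k) * B (-w) w = 0
          simp only [map_neg, LinearMap.neg_apply, halt]
          ring
        rw [hmw, map_one, one_mul]
      rw [Finset.sum_congr rfl (fun w _ => hterm2 w), Finset.sum_const, Finset.card_univ,
        nsmul_eq_mul]
    rw [hc, map_smul, LinearMap.trace_one, smul_eq_mul] at htrT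
    exact htrT
  -- pass to matrices
  let b := Module.finBasis ℂ V
  let e := LinearMap.toMatrixAlgEquiv b
  have he : ∀ f : V →ₗ[ℂ] V, e f = LinearMap.toMatrix b b f := fun f => rfl
  have htrace_mat : ∀ f : V →ₗ[ℂ] V, LinearMap.trace ℂ V f = Matrix.trace (e f) := by
    intro f
    rw [he, LinearMap.trace_eq_matrix_trace ℂ b]
  have hentry : ∀ (i j : Fin (Module.finrank ℂ V))
      (M N' : Matrix (Fin (Module.finrank ℂ V)) (Fin (Module.finrank ℂ V)) ℂ),
      (M * Matrix.single i j (1 : ℂ) * N') i j = M i i * N' j j := by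
    intro i j M N'
    rw [Matrix.mul_assoc, Matrix.mul_apply]
    rw [Finset.sum_eq_single i]
    · rw [Matrix.single_mul_apply_same, one_mul]
    · intro a _ ha
      simp [ha]
    · intro h
      exact absurd (Finset.mem_univ i) h
  have hmain : ∀ i j : Fin (Module.finrank ℂ V), ∃ c : ℂ,
      (∑ w : W, (e (ρ (w, (0 : k)))) i i * (e (ρ (-w, (0 : k)))) j j)
          = (if i = j then c else 0)
      ∧ c * (Module.finrank ℂ V : ℂ)
          = (Fintype.card W : ℂ) * (if i = j then 1 else 0) := by
    intro i j
    obtain ⟨c, hc1, hc2⟩ := hkey (e.symm (Matrix.single i j (1 : ℂ)))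
    refine ⟨c, ?_, ?_⟩
    · have hm := congrArg e hc1
      rw [map_sum, map_smul, map_one] at hm
      have hconv : ∀ w : W,
          e (ρ (w, (0 : k)) * e.symm (Matrix.single i j (1 : ℂ)) * ρ (-w, (0 : k)))
            = e (ρ (w, (0 : k))) * Matrix.single i j (1 : ℂ) * e (ρ (-w, (0 : k))) := by
        intro w
        rw [map_mul, map_mul, AlgEquiv.apply_symm_apply]
      rw [Finset.sum_congr rfl (fun w _ => hconv w)] at hm
      have hm2 := congrArg (fun M : Matrix (Fin (Module.finrank ℂ V))
        (Fin (Module.finrank ℂ V)) ℂ => M i j) hm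
      simp only [Matrix.sum_apply, Matrix.smul_apply, Matrix.one_apply, smul_eq_mul] at hm2
      rw [Finset.sum_congr rfl (fun w _ => hentry i j _ _)] at hm2
      rw [hm2]
      by_cases hij : i = j <;> simp [hij]
    · rw [hc2]
      congr 1
      rw [htrace_mat, AlgEquiv.apply_symm_apply]
      by_cases hij : i = j
      · subst hij
        rw [Matrix.trace]
        simp [Matrix.single, Matrix.diag]
      · rw [Matrix.trace, if_neg hij]
        refine Finset.sum_eq_zero fun x _ => ?_
        simp only [Matrix.diag, Matrix.single, Matrix.of_apply, ite_eq_right_iff,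
          and_imp]
        intro h1 h2
        exact absurd (h1.trans h2.symm) hij
  choose cf hcf1 hcf2 using hmain
  -- evaluate the double sum in two ways
  have hS1 : (∑ w : W, LinearMap.trace ℂ V (ρ (w, (0 : k)))
        * LinearMap.trace ℂ V (ρ (-w, (0 : k))))
      = ∑ i : Fin (Module.finrank ℂ V), cf i i := by
    have step1 : (∑ w : W, LinearMap.trace ℂ V (ρ (w, (0 : k)))
          * LinearMap.trace ℂ V (ρ (-w, (0 : k))))
        = ∑ w : W, ∑ i : Fin (Module.finrank ℂ V), ∑ j : Fin (Module.finrank ℂ V),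
            (e (ρ (w, (0 : k)))) i i * (e (ρ (-w, (0 : k)))) j j := by
      refine Finset.sum_congr rfl (fun w _ => ?_)
      rw [htrace_mat, htrace_mat]
      rw [Matrix.trace, Matrix.trace, Finset.sum_mul_sum]
      rfl
    rw [step1, Finset.sum_comm]
    refine Finset.sum_congr rfl (fun i _ => ?_)
    rw [Finset.sum_comm]
    calc ∑ j : Fin (Module.finrank ℂ V), ∑ w : W,
          (e (ρ (w, (0 : k)))) i i * (e (ρ (-w, (0 : k)))) j j
        = ∑ j : Fin (Module.finrank ℂ V), (if i = j then cf i j else 0) :=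
          Finset.sum_congr rfl (fun j _ => hcf1 i j)
      _ = cf i i := by simp
  have hS2 : (∑ i : Fin (Module.finrank ℂ V), cf i i) * (Module.finrank ℂ V : ℂ)
      = (Module.finrank ℂ V : ℂ) * (Fintype.card W : ℂ) := by
    rw [Finset.sum_mul]
    calc (∑ i : Fin (Module.finrank ℂ V), cf i i * (Module.finrank ℂ V : ℂ))
        = ∑ _i : Fin (Module.finrank ℂ V), (Fintype.card W : ℂ) := by
          refine Finset.sum_congr rfl (fun i _ => ?_)
          rw [hcf2 i i, if_pos rfl, mul_one]
      _ = (Module.finrank ℂ V : ℂ) * (Fintype.card W : ℂ) := by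
          rw [Finset.sum_const, Finset.card_univ, Fintype.card_fin, nsmul_eq_mul]
  have hS3 : (∑ w : W, LinearMap.trace ℂ V (ρ (w, (0 : k)))
        * LinearMap.trace ℂ V (ρ (-w, (0 : k))))
      = (Module.finrank ℂ V : ℂ) * (Module.finrank ℂ V : ℂ) := by
    rw [Finset.sum_eq_single (0 : W)]
    · rw [neg_zero, ← hone, map_one, LinearMap.trace_one]
    · intro w _ hw
      rw [hvan w hw, zero_mul]
    · intro h
      exact absurd (Finset.mem_univ _) h
  have hdC : (Module.finrank ℂ V : ℂ) ≠ 0 := Nat.cast_ne_zero.mpr hdpos.ne'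
  have hsq : (Module.finrank ℂ V : ℂ) * (Module.finrank ℂ V : ℂ) = (Fintype.card W : ℂ) := by
    have h := hS2
    rw [← hS1, hS3] at h
    have h' : (Module.finrank ℂ V : ℂ)
        * ((Module.finrank ℂ V : ℂ) * (Module.finrank ℂ V : ℂ))
        = (Module.finrank ℂ V : ℂ) * (Fintype.card W : ℂ) := by
      rw [← h]; ring
    exact mul_left_cancel₀ hdC h'
  have hcard : Fintype.card W = q ^ (2 * N) := by
    rw [Module.card_fintype (Module.finBasis k W)]
    simp [hq, hdim]
  rw [hcard] at hsq
  have hnat : Module.finrank ℂ V * Module.finrank ℂ V = q ^ (2 * N) := by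
    exact_mod_cast hsq
  have hfin : q ^ (2 * N) = q ^ N * q ^ N := by
    rw [two_mul, pow_add]
  rw [hfin] at hnat
  exact Nat.mul_self_inj.mp hnat
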